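/- arXiv:2605.02365 — 2 statements merged into one kernel-verified Lean document; each statement's English description precedes it below -/
import Mathlib

section
/- Let F : Q → ℝⁿ be a C¹ vector field on an open set Q ⊆ ℝⁿ of the form Fᵢ(v) = mᵢ(v)·(u(v) - qᵢ(vᵢ)), where u(v) = 1 - Σₖ vₖ, each mᵢ : Q → ℝ is continuous and strictly positive, and each qᵢ : ℝ → ℝ is continuous. Define V(v) = ½ u(v)² + Σᵢ ∫₀^{vᵢ} qᵢ(r) dr. Then along any solution v(t) of v̇ = F(v) contained in Q, d/dt V(v(t)) = -Σᵢ mᵢ(v(t))·(u(v(t)) - qᵢ(vᵢ(t)))² ≤ 0, with equality at time t if and only if F(v(t)) = 0. -/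
theorem stmt4 {n : ℕ} (Q : Set (Fin n → ℝ)) (hQ : IsOpen Q)
    (m : Fin n → (Fin n → ℝ) → ℝ) (q : Fin n → ℝ → ℝ)
    (hm : ∀ i, ContinuousOn (m i) Q) (hmpos : ∀ i, ∀ x ∈ Q, 0 < m i x)
    (hq : ∀ i, Continuous (q i))
    (u : (Fin n → ℝ) → ℝ) (hu : ∀ x, u x = 1 - ∑ k, x k)
    (F : (Fin n → ℝ) → Fin n → ℝ)
    (hF : ∀ x i, F x i = m i x * (u x - q i (x i)))
    (V : (Fin n → ℝ) → ℝ)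
    (hV : ∀ x, V x = (1 / 2) * (u x) ^ 2 + ∑ i, ∫ r in (0 : ℝ)..(x i), q i r)
    (v : ℝ → Fin n → ℝ) (hsol : ∀ t, v t ∈ Q ∧ HasDerivAt v (F (v t)) t)
    (t : ℝ) :
    HasDerivAt (fun s => V (v s))
        (-∑ i, m i (v t) * (u (v t) - q i (v t i)) ^ 2) t ∧
    (-∑ i, m i (v t) * (u (v t) - q i (v t i)) ^ 2 ≤ 0) ∧
    ((-∑ i, m i (v t) * (u (v t) - q i (v t i)) ^ 2 = 0) ↔ F (v t) = 0) := by
  obtain ⟨hvQ, hvd⟩ := hsol t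
  have hvi : ∀ i, HasDerivAt (fun s => v s i) (F (v t) i) t :=
    hasDerivAt_pi.mp hvd
  have hsum : HasDerivAt (fun s => ∑ k, v s k) (∑ k, F (v t) k) t :=
    HasDerivAt.fun_sum (fun k _ => hvi k)
  have hu' : HasDerivAt (fun s => u (v s)) (-(∑ k, F (v t) k)) t := by
    simp only [hu]
    simpa using (hasDerivAt_const t (1 : ℝ)).fun_sub hsum
  have hsq : HasDerivAt (fun s => (1 / 2 : ℝ) * (u (v s)) ^ 2)
      ((1 / 2 : ℝ) * (2 * u (v t) * (-(∑ k, F (v t) k)))) t := by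
    have := (hu'.fun_pow 2).const_mul (1 / 2 : ℝ)
    refine this.congr_deriv ?_
    ring
  have hint : ∀ i, HasDerivAt (fun s => ∫ r in (0 : ℝ)..(v s i), q i r)
      (q i (v t i) * F (v t) i) t := by
    intro i
    have h1 : HasDerivAt (fun y => ∫ r in (0 : ℝ)..y, q i r) (q i (v t i)) (v t i) :=
      ((hq i).integral_hasStrictDerivAt 0 (v t i)).hasDerivAt
    exact h1.comp t (hvi i)
  have hV' : HasDerivAt (fun s => V (v s))
      ((1 / 2 : ℝ) * (2 * u (v t) * (-(∑ k, F (v t) k))) + ∑ i, q i (v t i) * F (v t) i) t := by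
    simp only [hV]
    exact hsq.add (HasDerivAt.fun_sum fun i _ => hint i)
  have key : (1 / 2 : ℝ) * (2 * u (v t) * (-(∑ k, F (v t) k))) + ∑ i, q i (v t i) * F (v t) i
      = -∑ i, m i (v t) * (u (v t) - q i (v t i)) ^ 2 := by
    calc (1 / 2 : ℝ) * (2 * u (v t) * (-(∑ k, F (v t) k))) + ∑ i, q i (v t i) * F (v t) i
        = ∑ i, (q i (v t i) * F (v t) i - u (v t) * F (v t) i) := by
          rw [Finset.sum_sub_distrib, ← Finset.mul_sum]; ring
      _ = ∑ i, -(m i (v t) * (u (v t) - q i (v t i)) ^ 2) := by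
          refine Finset.sum_congr rfl fun i _ => ?_
          rw [hF]; ring
      _ = -∑ i, m i (v t) * (u (v t) - q i (v t i)) ^ 2 := by
          rw [Finset.sum_neg_distrib]
  have hterm : ∀ i, 0 ≤ m i (v t) * (u (v t) - q i (v t i)) ^ 2 := fun i =>
    mul_nonneg (hmpos i _ hvQ).le (sq_nonneg _)
  refine ⟨key ▸ hV', neg_nonpos.mpr (Finset.sum_nonneg fun i _ => hterm i), ?_⟩
  rw [neg_eq_zero, Finset.sum_eq_zero_iff_of_nonneg fun i _ => hterm i]
  constructor
  · intro h
    funext i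
    have := h i (Finset.mem_univ i)
    rcases mul_eq_zero.mp this with h0 | h0
    · exact absurd h0 (hmpos i _ hvQ).ne'
    · rw [hF]
      rw [sq_eq_zero_iff] at h0
      rw [h0, mul_zero]; rfl
  · intro h i _
    have : F (v t) i = 0 := by rw [h]; rfl
    rw [hF] at this
    rcases mul_eq_zero.mp this with h0 | h0
    · exact absurd h0 (hmpos i _ hvQ).ne'
    · rw [h0]; ring
end

section
/- Let x ∈ ℝⁿ with x ≠ 0 and σ : ℝ → ℝ be C¹ with σ(s) = 0 iff s = 0. Then the set ζ_x = {θ = (P, W, b) ∈ ℝ^{n×N} × ℝ^{N×n} × ℝ^N : -x + Pσ(Wx+b) = 0} is an embedded C¹ submanifold of the parameter space ℝ^k (k = N(1+2n)) of codimension n; in particular it has Lebesgue measure zero and its complement is open and dense. -/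
open MeasureTheory

private lemma stmt12_contDiff {n N : ℕ} (x : Fin n → ℝ) (σ : ℝ → ℝ) (hσ : ContDiff ℝ 1 σ) :
    ContDiff ℝ 1 (fun θ : (Fin n → Fin N → ℝ) × (Fin N → Fin n → ℝ) × (Fin N → ℝ) =>
      fun i => -x i + ∑ j, θ.1 i j * σ (∑ l, θ.2.1 j l * x l + θ.2.2 j)) := by
  apply contDiff_pi.mpr
  intro i
  apply ContDiff.add contDiff_const
  apply ContDiff.sum
  intro j _
  have e1 : ContDiff ℝ 1 (fun θ : (Fin n → Fin N → ℝ) × (Fin N → Fin n → ℝ) × (Fin N → ℝ) =>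
      θ.1 i j) := contDiff_pi.mp (contDiff_pi.mp contDiff_fst i) j
  refine e1.mul (hσ.comp ?_)
  apply ContDiff.add
  · apply ContDiff.sum
    intro l _
    exact (contDiff_pi.mp (contDiff_pi.mp (contDiff_fst.comp contDiff_snd) j) l).mul
      contDiff_const
  · exact contDiff_pi.mp (contDiff_snd.comp contDiff_snd) j

/-- The linear map `P ↦ fun i => ∑ j, P i j * c j`. -/
private noncomputable def stmt12_L {n N : ℕ} (c : Fin N → ℝ) :
    (Fin n → Fin N → ℝ) →L[ℝ] (Fin n → ℝ) :=
  LinearMap.toContinuousLinearMap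
    { toFun := fun P i => ∑ j, P i j * c j
      map_add' := by
        intro P Q
        funext i
        simp [add_mul, Finset.sum_add_distrib]
      map_smul' := by
        intro r P
        funext i
        simp [Finset.mul_sum, mul_assoc] }

private lemma stmt12_L_apply {n N : ℕ} (c : Fin N → ℝ) (P : Fin n → Fin N → ℝ) (i : Fin n) :
    stmt12_L c P i = ∑ j, P i j * c j := rfl

private lemma stmt12_L_surj {n N : ℕ} (c : Fin N → ℝ) (j₀ : Fin N) (hj₀ : c j₀ ≠ 0) :
    Function.Surjective (stmt12_L (n := n) c) := by
  intro y
  refine ⟨fun i j => if j = j₀ then y i / c j₀ else 0, ?_⟩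
  funext i
  rw [stmt12_L_apply]
  have : ∀ j : Fin N, (if j = j₀ then y i / c j₀ else 0) * c j
      = if j = j₀ then y i / c j₀ * c j else 0 := by
    intro j; split <;> simp
  simp only [this]
  rw [Finset.sum_ite_eq' Finset.univ j₀ (fun j => y i / c j₀ * c j)]
  simp [div_mul_cancel₀, hj₀]

theorem stmt12 {n N : ℕ} (x : Fin n → ℝ) (hx : x ≠ 0)
    (σ : ℝ → ℝ) (hσ : ContDiff ℝ 1 σ) (hσ0 : ∀ t : ℝ, σ t = 0 ↔ t = 0)
    (ζ : Set ((Fin n → Fin N → ℝ) × (Fin N → Fin n → ℝ) × (Fin N → ℝ)))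
    (hζ : ζ = {θ : (Fin n → Fin N → ℝ) × (Fin N → Fin n → ℝ) × (Fin N → ℝ) |
      (fun i => -x i + ∑ j, θ.1 i j * σ (∑ l, θ.2.1 j l * x l + θ.2.2 j)) = 0}) :
    (∃ G : ((Fin n → Fin N → ℝ) × (Fin N → Fin n → ℝ) × (Fin N → ℝ)) → Fin n → ℝ,
        ContDiff ℝ 1 G ∧ ζ = G ⁻¹' {0} ∧
        ∀ θ ∈ ζ, Function.Surjective (fderiv ℝ G θ)) ∧
    volume ζ = 0 ∧ IsOpen ζᶜ ∧ Dense ζᶜ := by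
  classical
  set G : ((Fin n → Fin N → ℝ) × (Fin N → Fin n → ℝ) × (Fin N → ℝ)) → Fin n → ℝ :=
    fun θ => fun i => -x i + ∑ j, θ.1 i j * σ (∑ l, θ.2.1 j l * x l + θ.2.2 j) with hGdef
  have hG : ContDiff ℝ 1 G := stmt12_contDiff x σ hσ
  have hpre : ζ = G ⁻¹' {0} := by
    rw [hζ]; rfl
  -- surjectivity of the differential on ζ
  have hsurj : ∀ θ ∈ ζ, Function.Surjective (fderiv ℝ G θ) := by
    intro θ hθ
    set c : Fin N → ℝ := fun j => σ (∑ l, θ.2.1 j l * x l + θ.2.2 j) with hcdef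
    have hθ' : ∀ i, x i = ∑ j, θ.1 i j * c j := by
      intro i
      rw [hζ] at hθ
      have := congrFun (hθ : (fun i => -x i + ∑ j, θ.1 i j *
        σ (∑ l, θ.2.1 j l * x l + θ.2.2 j)) = 0) i
      simp only [Pi.zero_apply] at this
      linarith [this]
    obtain ⟨j₀, hj₀⟩ : ∃ j₀, c j₀ ≠ 0 := by
      by_contra hcc
      push_neg at hcc
      apply hx
      funext i
      simp [hθ' i, hcc]
    -- the inclusion varying only P
    set φ : (Fin n → Fin N → ℝ) → ((Fin n → Fin N → ℝ) × (Fin N → Fin n → ℝ) × (Fin N → ℝ)) :=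
      fun P => (P, θ.2) with hφdef
    have hkey : (G ∘ φ) = fun P => (fun i => -x i) + stmt12_L c P := by
      funext P
      funext i
      simp [G, φ, stmt12_L_apply, c]
    have hφd : DifferentiableAt ℝ φ θ.1 :=
      DifferentiableAt.prodMk differentiableAt_fun_id (differentiableAt_const θ.2)
    have hGd : DifferentiableAt ℝ G θ := (hG.differentiable one_ne_zero) θ
    have hGd' : DifferentiableAt ℝ G (φ θ.1) := by
      simpa [φ] using hGd
    have hchain : fderiv ℝ (G ∘ φ) θ.1 = (fderiv ℝ G θ).comp (fderiv ℝ φ θ.1) := by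
      have h := fderiv_comp θ.1 hGd' hφd
      rwa [show φ θ.1 = θ by simp [φ]] at h
    have hlin : fderiv ℝ (G ∘ φ) θ.1 = stmt12_L c := by
      rw [hkey]
      rw [show (fun P => (fun i => -x i) + stmt12_L c P)
          = fun P => (fun i => -x i) + (stmt12_L c) P from rfl]
      rw [fderiv_const_add]
      exact (stmt12_L c).fderiv
    intro y
    obtain ⟨P, hP⟩ := stmt12_L_surj (n := n) c j₀ hj₀ y
    refine ⟨fderiv ℝ φ θ.1 P, ?_⟩
    have : (fderiv ℝ G θ).comp (fderiv ℝ φ θ.1) P = y := by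
      rw [← hchain, hlin, hP]
    simpa using this
  -- ζ is closed
  have hclosed : IsClosed ζ := by
    rw [hpre]
    exact isClosed_singleton.preimage hG.continuous
  -- measure zero
  have hvol : volume ζ = 0 := by
    have hmeas : MeasurableSet ζ := hclosed.measurableSet
    have hswap := Measure.measurePreserving_swap
      (μ := (volume : Measure ((Fin N → Fin n → ℝ) × (Fin N → ℝ))))
      (ν := (volume : Measure (Fin n → Fin N → ℝ)))
    have hmeas' : MeasurableSet (Prod.swap ⁻¹' ζ) :=
      hmeas.preimage measurable_swap
    have h0 : ((volume : Measure ((Fin N → Fin n → ℝ) × (Fin N → ℝ))).prod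
        (volume : Measure (Fin n → Fin N → ℝ))) (Prod.swap ⁻¹' ζ) = 0 := by
      rw [Measure.measure_prod_null hmeas']
      refine Filter.Eventually.of_forall ?_
      intro wb
      show volume (Prod.mk wb ⁻¹' (Prod.swap ⁻¹' ζ)) = 0
      set c : Fin N → ℝ := fun j => σ (∑ l, wb.1 j l * x l + wb.2 j) with hcdef
      have hslice : (Prod.mk wb ⁻¹' (Prod.swap ⁻¹' ζ))
          = {P : Fin n → Fin N → ℝ | stmt12_L c P = x} := by
        ext P
        simp only [Set.mem_preimage, Prod.swap_prod_mk, hζ, Set.mem_setOf_eq]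
        constructor
        · intro h
          funext i
          have := congrFun h i
          simp only [Pi.zero_apply] at this
          rw [stmt12_L_apply]
          linarith [this]
        · intro h
          funext i
          have := congrFun h i
          rw [stmt12_L_apply] at this
          simp only [Pi.zero_apply]
          linarith [this]
      rw [hslice]
      rcases Set.eq_empty_or_nonempty {P : Fin n → Fin N → ℝ | stmt12_L c P = x} with he | hne
      · rw [he]; simp
      · obtain ⟨P₀, hP₀⟩ := hne
        have hP₀' : stmt12_L c P₀ = x := hP₀
        have hK : LinearMap.ker (stmt12_L (n := n) c : (Fin n → Fin N → ℝ) →ₗ[ℝ] (Fin n → ℝ)) ≠ ⊤ := by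
          intro htop
          apply hx
          have : P₀ ∈ LinearMap.ker (stmt12_L (n := n) c : (Fin n → Fin N → ℝ) →ₗ[ℝ] (Fin n → ℝ)) := by rw [htop]; trivial
          rw [← hP₀']
          exact this
        have hSK : {P : Fin n → Fin N → ℝ | stmt12_L c P = x}
            = (fun P => P + (-P₀)) ⁻¹' ((LinearMap.ker (stmt12_L (n := n) c : (Fin n → Fin N → ℝ) →ₗ[ℝ] (Fin n → ℝ)) :
              Submodule ℝ (Fin n → Fin N → ℝ)) : Set (Fin n → Fin N → ℝ)) := by
          ext P
          simp only [Set.mem_setOf_eq, Set.mem_preimage, SetLike.mem_coe,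
            LinearMap.mem_ker, ContinuousLinearMap.coe_coe, ← sub_eq_add_neg, map_sub, hP₀', sub_eq_zero]
        rw [hSK, measure_preimage_add_right]
        exact Measure.addHaar_submodule volume _ hK
    have := hswap.measure_preimage hmeas.nullMeasurableSet
    rw [h0] at this
    rw [Measure.volume_eq_prod]
    exact this.symm
  haveI : (volume : Measure ((Fin N → Fin n → ℝ) × (Fin N → ℝ))).IsOpenPosMeasure :=
    Measure.prod.instIsOpenPosMeasure
  haveI : (volume : Measure ((Fin n → Fin N → ℝ) × (Fin N → Fin n → ℝ) ×
      (Fin N → ℝ))).IsOpenPosMeasure :=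
    Measure.prod.instIsOpenPosMeasure
  refine ⟨⟨G, hG, hpre, hsurj⟩, hvol, hclosed.isOpen_compl, ?_⟩
  rw [← interior_eq_empty_iff_dense_compl]
  by_contra hne
  have : 0 < volume ζ :=
    Measure.measure_pos_of_nonempty_interior volume (Set.nonempty_iff_ne_empty.mpr hne)
  simp [hvol] at this
end
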